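/- There exists a complex box mapping $F_3 : \mathcal{U}_3 \to \mathcal{V}_3$ with $\mathcal{V}_3 = \mathbb{D}$ the open unit disk, each component of $\mathcal{U}_3$ compactly contained in $\mathbb{D}$, and an open disk $W = \mathbb{D}_{1/2}$ such that $F_3^n(W) \cap F_3^m(W) = \emptyset$ for all $n \neq m$; concretely, choosing real Möbius transformations $g_k : \mathbb{D}\to\mathbb{D}$ with $g_k(\mathbb{D}_{a_k})$ pairwise disjoint, $\mathcal{U}_3 = \bigcup_k g_k(\mathbb{D}_{a_k})$, and $F_3(x) = g_{k+1}(g_k^{-1}(x)/a_k)$ on $g_k(\mathbb{D}_{a_k})$ where $\prod a_i = 1/2$, one has $F_3^n(x) = g_{n+1}(x / (a_1\cdots a_n))$ for all $x \in W$ and hence $F_3^n(W) \subset g_{n+1}(\mathbb{D}_{a_{n+1}})$. -/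

import Mathlib

open Set Topology Filter MeasureTheory

noncomputable section

structure ComplexBoxMapping : Type where
  U : Set ℂ
  V : Set ℂ
  F : ℂ → ℂ
  isOpen_U : IsOpen U
  isOpen_V : IsOpen V
  subset_UV : U ⊆ V
  mapsTo : Set.MapsTo F U V
  holo : DifferentiableOn ℂ F U
  crit_finite : {z | z ∈ U ∧ deriv F z = 0}.Finite
  components_V_finite : {C | ∃ x ∈ V, C = connectedComponentIn V x}.Finite
  components_V_simplyConnected : ∀ x ∈ V, SimplyConnectedSpace (connectedComponentIn V x)
  components_V_disjoint_closures : ∀ x ∈ V, ∀ y ∈ V,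
      connectedComponentIn V x ≠ connectedComponentIn V y →
      closure (connectedComponentIn V x) ∩ closure (connectedComponentIn V y) = ∅
  components_U_simplyConnected : ∀ x ∈ U, SimplyConnectedSpace (connectedComponentIn U x)
  components_U : ∀ x ∈ U,
      connectedComponentIn U x = connectedComponentIn V x ∨
      (IsCompact (closure (connectedComponentIn U x)) ∧
        closure (connectedComponentIn U x) ⊆ connectedComponentIn V x)
  components_U_disjoint_closures : ∀ x ∈ U, ∀ y ∈ U,
      connectedComponentIn U x ≠ connectedComponentIn U y →
      closure (connectedComponentIn U x) ∩ closure (connectedComponentIn U y) = ∅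
  maps_components : ∀ x ∈ U, F '' connectedComponentIn U x = connectedComponentIn V (F x)
  proper_components : ∀ x ∈ U, ∀ K, K ⊆ connectedComponentIn V (F x) → IsCompact K →
      IsCompact (connectedComponentIn U x ∩ F ⁻¹' K)

namespace ComplexBoxMapping

/-- The set of points whose first `n` iterates remain in the domain and whose
`n`-th iterate lies in `V`; the puzzle pieces of depth `n` are its connected components. -/
def stays (B : ComplexBoxMapping) (n : ℕ) : Set ℂ :=
  {z | (∀ k < n, B.F^[k] z ∈ B.U) ∧ B.F^[n] z ∈ B.V}

/-- `P` is a puzzle piece of depth `n`: a connected component of `F^{-n}(V)`. -/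
def IsPuzzlePiece (B : ComplexBoxMapping) (n : ℕ) (P : Set ℂ) : Prop :=
  ∃ z ∈ B.stays n, P = connectedComponentIn (B.stays n) z

/-- The non-escaping (filled Julia) set `K(F)`. -/
def nonEscaping (B : ComplexBoxMapping) : Set ℂ := {z | ∀ n, B.F^[n] z ∈ B.U}

/-- The no permutation condition. -/
def NoPermutation (B : ComplexBoxMapping) : Prop :=
  ∀ x ∈ B.U, ∃ n, ¬ (B.F^[n] '' connectedComponentIn B.U x ⊆ B.U)

end ComplexBoxMapping

namespace S15

open Metric Complex

def φ (c : ℝ) (z : ℂ) : ℂ := (z + c) / (1 + c * z)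
def mC (c r : ℝ) : ℝ := c * (1 - r^2) / (1 - c^2*r^2)
def rC (c r : ℝ) : ℝ := r * (1 - c^2) / (1 - c^2*r^2)

lemma den_ne {c : ℝ} (hc : |c| ≤ 1) {z : ℂ} (hz : norm z < 1) :
    (1 : ℂ) + c * z ≠ 0 := by
  intro h
  have h2 : (c : ℂ) * z = -1 := by linear_combination h
  have h3 := congrArg norm h2
  simp only [norm_mul, Complex.norm_real, Real.norm_eq_abs, norm_neg, norm_one] at h3
  nlinarith [norm_nonneg z, abs_nonneg c]

lemma normSq_lt_one {y : ℂ} (hy : norm y < 1) : Complex.normSq y < 1 := by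
  rw [← Complex.sq_norm]; nlinarith [norm_nonneg y]

lemma phi_maps {c : ℝ} (hc : |c| < 1) {y : ℂ} (hy : norm y < 1) :
    norm (φ c y) < 1 := by
  have hden := den_ne hc.le hy
  have hdpos : 0 < norm (1 + (c:ℂ) * y) := by
    simpa [norm_pos_iff] using hden
  rw [φ, norm_div, div_lt_one hdpos]
  have h1 : Complex.normSq (y + (c:ℂ)) < Complex.normSq (1 + (c:ℂ) * y) := by
    have hs := normSq_lt_one hy
    have hc2 : c^2 < 1 := by nlinarith [abs_nonneg c, _root_.sq_abs c]
    simp only [Complex.normSq_apply, add_re, add_im, mul_re, mul_im, Complex.ofReal_re,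
      Complex.ofReal_im, Complex.one_re, Complex.one_im] at *
    nlinarith [hs, hc2]
  calc norm (y + (c:ℂ)) = Real.sqrt (Complex.normSq (y + (c:ℂ))) := Complex.norm_def _
    _ < Real.sqrt (Complex.normSq (1 + (c:ℂ)*y)) := by
        exact Real.sqrt_lt_sqrt (Complex.normSq_nonneg _) h1
    _ = norm (1 + (c:ℂ)*y) := (Complex.norm_def _).symm

lemma phi_inv {c : ℝ} (hc : |c| < 1) {y : ℂ} (hy : norm y < 1) :
    φ (-c) (φ c y) = y := by
  have h1 : (1:ℂ) + c*y ≠ 0 := den_ne hc.le hy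
  have hz := phi_maps hc hy
  have h2 : (1:ℂ) + (-c : ℝ) * (φ c y) ≠ 0 := den_ne (by rw [abs_neg]; exact hc.le) hz
  rw [φ] at h2 ⊢
  rw [φ] at *
  push_cast at h2 ⊢
  field_simp at h2 ⊢
  ring_nf
  ring_nf at h2
  have hc2 : (1:ℂ) - (c:ℂ)^2 ≠ 0 := by
    norm_cast; intro h; nlinarith [abs_lt.mp hc]
  field_simp
  ring


variable {c r : ℝ}

lemma hD (hc1 : c < 1) (hc0 : 0 ≤ c) (hr0 : 0 < r) (hr1 : r ≤ 1) : 0 < 1 - c^2*r^2 := by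
  have h1 : c^2 < 1 := by nlinarith
  have h2 : r^2 ≤ 1 := by nlinarith
  nlinarith

lemma rC_pos (hc1 : c < 1) (hc0 : 0 ≤ c) (hr0 : 0 < r) (hr1 : r ≤ 1) : 0 < rC c r :=
  div_pos (mul_pos hr0 (by nlinarith)) (hD hc1 hc0 hr0 hr1)

lemma mC_nonneg (hc1 : c < 1) (hc0 : 0 ≤ c) (hr0 : 0 < r) (hr1 : r ≤ 1) : 0 ≤ mC c r :=
  div_nonneg (mul_nonneg hc0 (by nlinarith)) (hD hc1 hc0 hr0 hr1).le

lemma sum_le_one (hc1 : c < 1) (hc0 : 0 ≤ c) (hr0 : 0 < r) (hr1 : r ≤ 1) :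
    mC c r + rC c r ≤ 1 := by
  have hd := hD hc1 hc0 hr0 hr1
  rw [mC, rC, ← add_div, div_le_one hd]
  nlinarith [mul_nonneg (mul_nonneg (by linarith : (0:ℝ) ≤ 1 - c) (by linarith : (0:ℝ) ≤ 1 - r))
    (by nlinarith : (0:ℝ) ≤ 1 - c*r)]

lemma sum_lt_one (hc1 : c < 1) (hc0 : 0 ≤ c) (hr0 : 0 < r) (hr1 : r < 1) :
    mC c r + rC c r < 1 := by
  have hd := hD hc1 hc0 hr0 hr1.le
  rw [mC, rC, ← add_div, div_lt_one hd]
  nlinarith [mul_pos (mul_pos (by linarith : (0:ℝ) < 1 - c) (by linarith : (0:ℝ) < 1 - r))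
    (by nlinarith : (0:ℝ) < 1 - c*r)]

lemma abs_lt_iff {w : ℂ} {ρ : ℝ} (hρ : 0 < ρ) :
    norm w < ρ ↔ Complex.normSq w < ρ^2 := by
  constructor
  · intro h; rw [← Complex.sq_norm]; nlinarith [norm_nonneg w]
  · intro h; nlinarith [Complex.sq_norm w, norm_nonneg w]

lemma poly_iff (hd : 0 < 1 - c^2*r^2) (hr0 : 0 < r) {y : ℂ} :
    Complex.normSq (y + ((c*r^2 : ℝ):ℂ)) < r^2 * Complex.normSq (1 + (c:ℂ)*y)
      ↔ Complex.normSq y < r^2 := by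
  simp only [Complex.normSq_apply, add_re, add_im, mul_re, mul_im, Complex.ofReal_re,
    Complex.ofReal_im, Complex.one_re, Complex.one_im]
  constructor <;> intro h <;> nlinarith [h, hd]

lemma mem_iff (hc1 : c < 1) (hc0 : 0 ≤ c) (hr0 : 0 < r) (hr1 : r ≤ 1) {y : ℂ}
    (hy : (1:ℂ) + c*y ≠ 0) :
    norm (φ c y - ((mC c r : ℝ):ℂ)) < rC c r ↔ norm y < r := by
  have hd := hD hc1 hc0 hr0 hr1
  have hdC : ((1 - c^2*r^2 : ℝ):ℂ) ≠ 0 := Complex.ofReal_ne_zero.mpr hd.ne'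
  have hc2 : (0:ℝ) < 1 - c^2 := by nlinarith
  have hnum : (φ c y - ((mC c r : ℝ):ℂ)) * ((1 + c*y) * ((1 - c^2*r^2 : ℝ):ℂ))
      = ((1 - c^2 : ℝ):ℂ) * (y + ((c*r^2 : ℝ):ℂ)) := by
    have hdC' : (1:ℂ) - (c:ℂ)^2*(r:ℂ)^2 ≠ 0 := by
      intro h; apply hdC; push_cast; linear_combination h
    have hy' : (1:ℂ) + y * c ≠ 0 := by rwa [mul_comm]
    rw [φ, mC]; push_cast
    field_simp
    ring
  have hns := congrArg Complex.normSq hnum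
  rw [map_mul, map_mul, map_mul, Complex.normSq_ofReal, Complex.normSq_ofReal] at hns
  -- hns : normSq (φ c y - m) * (normSq (1+cy) * (1-c²r²)²) = (1-c²)² * normSq (y + cr²)
  have hden_pos : 0 < Complex.normSq (1 + (c:ℂ)*y) := by
    rwa [Complex.normSq_pos]
  have hρ := rC_pos hc1 hc0 hr0 hr1
  rw [abs_lt_iff hρ, abs_lt_iff hr0]
  have hK : 0 < Complex.normSq (1 + (c:ℂ)*y) * (1 - c^2*r^2)^2 := by positivity
  rw [← mul_lt_mul_iff_left₀ hK]
  have hns2 : Complex.normSq (φ c y - ((mC c r : ℝ):ℂ)) * (Complex.normSq (1 + (c:ℂ)*y) * (1 - c^2*r^2)^2)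
      = (1-c^2)^2 * Complex.normSq (y + ((c*r^2 : ℝ):ℂ)) := by
    linear_combination hns
  rw [hns2]
  have hrd : rC c r ^2 * (Complex.normSq (1 + (c:ℂ)*y) * (1 - c^2*r^2)^2)
      = (1-c^2)^2 * (r^2 * Complex.normSq (1 + (c:ℂ)*y)) := by
    rw [rC, div_pow, div_mul_eq_mul_div, div_eq_iff (pow_ne_zero 2 hd.ne')]; ring
  rw [hrd]
  have h12 : (0:ℝ) < (1-c^2)^2 := by positivity
  rw [mul_lt_mul_iff_right₀ h12]
  exact poly_iff hd hr0

lemma phi_image (hc1 : c < 1) (hc0 : 0 ≤ c) (hr0 : 0 < r) (hr1 : r ≤ 1) :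
    φ c '' Metric.ball 0 r = Metric.ball (((mC c r : ℝ):ℂ)) (rC c r) := by
  have hcabs : |c| ≤ 1 := by rw [_root_.abs_of_nonneg hc0]; exact hc1.le
  have hcabs' : |c| < 1 := by rw [_root_.abs_of_nonneg hc0]; exact hc1
  ext z
  simp only [mem_image, Metric.mem_ball, Complex.dist_eq, sub_zero]
  constructor
  · rintro ⟨y, hy, rfl⟩
    have hy1 : norm y < 1 := lt_of_lt_of_le hy hr1
    exact (mem_iff hc1 hc0 hr0 hr1 (den_ne hcabs hy1)).2 hy
  · intro hz
    have hz1 : norm z < 1 := by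
      have h1 : norm z ≤ norm (z - ((mC c r : ℝ):ℂ)) + norm ((mC c r : ℝ):ℂ) := by
        calc norm z = norm (z - ((mC c r : ℝ):ℂ) + ((mC c r : ℝ):ℂ)) := by ring_nf
          _ ≤ _ := norm_add_le _ _
      have h2 : norm ((mC c r : ℝ):ℂ) = mC c r := by
        rw [Complex.norm_real, Real.norm_eq_abs, _root_.abs_of_nonneg (mC_nonneg hc1 hc0 hr0 hr1)]
      have := sum_le_one hc1 hc0 hr0 hr1
      rw [h2] at h1; linarith
    have hden2 : (1:ℂ) + ((-c : ℝ):ℂ)*z ≠ 0 := den_ne (by rw [abs_neg]; exact hcabs) hz1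
    set y := φ (-c) z with hy
    have hfy : φ c y = z := by
      have := phi_inv (c := -c) (by rw [abs_neg]; exact hcabs') hz1
      rwa [neg_neg] at this
    have hden2' : (1:ℂ) - (c:ℂ)*z ≠ 0 := by
      intro h; apply hden2; push_cast; linear_combination h
    have hyv : y = (z - (c:ℂ)) / (1 - (c:ℂ)*z) := by
      rw [hy, φ]; push_cast; congr 1 <;> ring
    have hmul : ((1:ℂ) + c*y) * (1 - (c:ℂ)*z) = ((1 - c^2 : ℝ):ℂ) := by
      rw [hyv]; push_cast; field_simp [hden2']; ring
    have hden3 : (1:ℂ) + c*y ≠ 0 := by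
      intro h
      rw [h, zero_mul] at hmul
      exact Complex.ofReal_ne_zero.mpr (by nlinarith) hmul.symm
    refine ⟨y, ?_, hfy⟩
    have hiff := mem_iff hc1 hc0 hr0 hr1 hden3
    rw [hfy] at hiff
    exact hiff.1 hz

lemma mC_one (hc1 : c < 1) (hc0 : 0 ≤ c) : mC c 1 = 0 := by
  rw [mC]; norm_num

lemma rC_one (hc1 : c < 1) (hc0 : 0 ≤ c) : rC c 1 = 1 := by
  have : (1:ℝ) - c^2 ≠ 0 := by nlinarith
  rw [rC]; field_simp

lemma phi_image_one (hc1 : c < 1) (hc0 : 0 ≤ c) :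
    φ c '' Metric.ball 0 1 = Metric.ball (0:ℂ) 1 := by
  have := phi_image hc1 hc0 (r := 1) one_pos le_rfl
  rwa [mC_one hc1 hc0, rC_one hc1 hc0, Complex.ofReal_zero] at this

/-! ### The sequences -/

def aa (i : ℕ) : ℝ := (1/2 : ℝ) ^ ((1/2 : ℝ) ^ (i+1))

lemma aa_pos (i : ℕ) : 0 < aa i := Real.rpow_pos_of_pos (by norm_num) _

lemma aa_lt_one (i : ℕ) : aa i < 1 :=
  Real.rpow_lt_one (by norm_num) (by norm_num) (by positivity)

lemma aa_mono : Monotone aa := by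
  intro i j h
  apply Real.rpow_le_rpow_of_exponent_ge (by norm_num) (by norm_num)
  apply pow_le_pow_of_le_one (by norm_num) (by norm_num) (by omega)

lemma aa_tendsto : Tendsto aa atTop (nhds 1) := by
  have h1 : Tendsto (fun i : ℕ => (1/2 : ℝ) ^ (i+1)) atTop (nhds 0) := by
    have := tendsto_pow_atTop_nhds_zero_of_lt_one (by norm_num : (0:ℝ) ≤ 1/2) (by norm_num)
    exact this.comp (tendsto_add_atTop_nat 1)
  have h2 : ContinuousAt (fun y : ℝ => (1/2 : ℝ) ^ y) 0 :=
    Real.continuousAt_const_rpow (by norm_num)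
  have := h2.tendsto.comp h1
  simp only [Real.rpow_zero] at this
  exact this

def PP (n : ℕ) : ℝ := ∏ i ∈ Finset.range n, aa i

lemma PP_eq (n : ℕ) : PP n = (1/2 : ℝ) ^ (1 - (1/2:ℝ)^n) := by
  induction n with
  | zero => simp [PP]
  | succ n ih =>
    rw [PP, Finset.prod_range_succ, ← PP, ih, aa, ← Real.rpow_add (by norm_num)]
    congr 1
    rw [pow_succ]
    ring

lemma PP_gt_half (n : ℕ) : 1/2 < PP n := by
  rw [PP_eq]
  have h0 : (0:ℝ) < (1/2:ℝ)^n := by positivity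
  calc (1/2 : ℝ) = (1/2 : ℝ) ^ (1:ℝ) := (Real.rpow_one _).symm
    _ < (1/2 : ℝ) ^ (1 - (1/2:ℝ)^n) :=
        Real.rpow_lt_rpow_of_exponent_gt (by norm_num) (by norm_num) (by linarith)

lemma PP_tendsto : Tendsto PP atTop (nhds (1/2)) := by
  have h1 : Tendsto (fun n : ℕ => 1 - (1/2 : ℝ) ^ n) atTop (nhds 1) := by
    have := tendsto_pow_atTop_nhds_zero_of_lt_one (by norm_num : (0:ℝ) ≤ 1/2) (by norm_num)
    have := (tendsto_const_nhds (x := (1:ℝ))).sub this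
    simpa using this
  have h2 : ContinuousAt (fun y : ℝ => (1/2 : ℝ) ^ y) 1 :=
    Real.continuousAt_const_rpow (by norm_num)
  have h3 := h2.tendsto.comp h1
  simp only [Real.rpow_one] at h3
  have : PP = fun n => (1/2:ℝ) ^ (1 - (1/2:ℝ)^n) := funext PP_eq
  rw [this]
  exact h3

def qq (t r : ℝ) : ℝ := (t + r)/(1 + t*r)

lemma qq_mem {t r : ℝ} (ht0 : 0 ≤ t) (ht1 : t < 1) (hr0 : 0 < r) (hr1 : r < 1) :
    0 ≤ qq t r ∧ qq t r < 1 := by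
  have hden : (0:ℝ) < 1 + t*r := by nlinarith
  constructor
  · exact div_nonneg (by linarith) hden.le
  · rw [qq, div_lt_one hden]; nlinarith

def cs : ℕ → ℝ
  | 0 => 0
  | k+1 => (qq (qq (cs k) (aa k)) (aa (k+1)) + 1)/2

lemma cs_mem : ∀ k, 0 ≤ cs k ∧ cs k < 1 := by
  intro k
  induction k with
  | zero => norm_num [cs]
  | succ k ih =>
    have h1 := qq_mem ih.1 ih.2 (aa_pos k) (aa_lt_one k)
    have h2 := qq_mem h1.1 h1.2 (aa_pos (k+1)) (aa_lt_one (k+1))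
    constructor
    · rw [cs]; linarith [h2.1]
    · rw [cs]; linarith [h2.2]

lemma mC_add_rC (hc1 : c < 1) (hc0 : 0 ≤ c) (hr0 : 0 < r) (hr1 : r < 1) :
    mC c r + rC c r = (c + r)/(1 + c*r) := by
  have hd : (1:ℝ) - c^2*r^2 ≠ 0 := (hD hc1 hc0 hr0 hr1.le).ne'
  have h2 : (1:ℝ) + c*r ≠ 0 := by nlinarith
  rw [mC, rC]
  field_simp
  ring

lemma mC_sub_rC (hc1 : c < 1) (hc0 : 0 ≤ c) (hr0 : 0 < r) (hr1 : r < 1) :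
    mC c r - rC c r = (c - r)/(1 - c*r) := by
  have hd : (1:ℝ) - c^2*r^2 ≠ 0 := (hD hc1 hc0 hr0 hr1.le).ne'
  have h2 : (1:ℝ) - c*r ≠ 0 := by nlinarith [hD hc1 hc0 hr0 hr1.le]
  rw [mC, rC]
  field_simp
  ring

/-- Abbreviations for the `k`-th disk data. -/
def mk (k : ℕ) : ℝ := mC (cs k) (aa k)
def rk (k : ℕ) : ℝ := rC (cs k) (aa k)
def qk (k : ℕ) : ℝ := qq (cs k) (aa k)
def pk (k : ℕ) : ℝ := (cs k - aa k)/(1 - cs k * aa k)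

lemma rk_pos (k : ℕ) : 0 < rk k := rC_pos (cs_mem k).2 (cs_mem k).1 (aa_pos k) (aa_lt_one k).le
lemma mk_nonneg (k : ℕ) : 0 ≤ mk k := mC_nonneg (cs_mem k).2 (cs_mem k).1 (aa_pos k) (aa_lt_one k).le
lemma mk_add_rk (k : ℕ) : mk k + rk k = qk k :=
  mC_add_rC (cs_mem k).2 (cs_mem k).1 (aa_pos k) (aa_lt_one k)
lemma mk_sub_rk (k : ℕ) : mk k - rk k = pk k :=
  mC_sub_rC (cs_mem k).2 (cs_mem k).1 (aa_pos k) (aa_lt_one k)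
lemma qk_lt_one (k : ℕ) : qk k < 1 :=
  (qq_mem (cs_mem k).1 (cs_mem k).2 (aa_pos k) (aa_lt_one k)).2
lemma qk_nonneg (k : ℕ) : 0 ≤ qk k :=
  (qq_mem (cs_mem k).1 (cs_mem k).2 (aa_pos k) (aa_lt_one k)).1
lemma mk_add_rk_lt_one (k : ℕ) : mk k + rk k < 1 := by
  rw [mk_add_rk]; exact qk_lt_one k

lemma pk_le_qk (k : ℕ) : pk k ≤ qk k := by
  rw [← mk_add_rk, ← mk_sub_rk]; linarith [rk_pos k]

lemma key (k : ℕ) : qk k < pk (k+1) := by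
  set t := qk k with ht
  have ht0 : 0 ≤ t := qk_nonneg k
  have ht1 : t < 1 := qk_lt_one k
  set r := aa (k+1) with hr
  have hr0 : 0 < r := aa_pos (k+1)
  have hr1 : r < 1 := aa_lt_one (k+1)
  have hcdef : cs (k+1) = (qq t r + 1)/2 := by rw [cs, ht, hr]; rfl
  have hq := qq_mem ht0 ht1 hr0 hr1
  have hclt : qq t r < cs (k+1) := by rw [hcdef]; linarith [hq.2]
  have hc1 : cs (k+1) < 1 := (cs_mem (k+1)).2
  have hc0 : 0 ≤ cs (k+1) := (cs_mem (k+1)).1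
  have hden : (0:ℝ) < 1 - cs (k+1) * r := by nlinarith
  rw [pk, ← hr, lt_div_iff₀ hden]
  have hden2 : (0:ℝ) < 1 + t*r := by nlinarith
  have h2 : t + r < cs (k+1) * (1 + t*r) := by
    rw [qq, div_lt_iff₀ hden2] at hclt; linarith
  nlinarith

lemma chain {k l : ℕ} (h : k < l) : qk k < pk l := by
  induction l with
  | zero => omega
  | succ l ih =>
    rcases Nat.lt_succ_iff_lt_or_eq.mp h with h' | h'
    · exact lt_of_le_of_lt (le_of_lt (lt_of_lt_of_le (ih h') (pk_le_qk l))) (key l)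
    · subst h'; exact key k

/-! ### The domains -/

def g (k : ℕ) : ℂ → ℂ := φ (cs k)
def Uk (k : ℕ) : Set ℂ := g k '' Metric.ball 0 (aa k)

lemma Uk_eq (k : ℕ) : Uk k = Metric.ball (((mk k : ℝ):ℂ)) (rk k) :=
  phi_image (cs_mem k).2 (cs_mem k).1 (aa_pos k) (aa_lt_one k).le

lemma Uk_open (k : ℕ) : IsOpen (Uk k) := by rw [Uk_eq]; exact Metric.isOpen_ball

lemma dist_mk {k l : ℕ} (h : k < l) : rk k + rk l < dist (((mk k : ℝ):ℂ)) (((mk l : ℝ):ℂ)) := by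
  have h1 := chain h
  have h2 : mk k + rk k < mk l - rk l := by rw [mk_add_rk, mk_sub_rk]; exact h1
  rw [Complex.dist_eq, ← Complex.ofReal_sub, Complex.norm_real, Real.norm_eq_abs]
  have : mk k - mk l < 0 := by linarith [rk_pos k, rk_pos l]
  rw [abs_of_neg this]
  linarith

lemma Uk_disj {k l : ℕ} (h : k ≠ l) : Disjoint (Uk k) (Uk l) := by
  rw [Uk_eq, Uk_eq]
  rcases h.lt_or_gt with h' | h'
  · exact Metric.ball_disjoint_ball (dist_mk h').le
  · exact (Metric.ball_disjoint_ball (dist_mk h').le).symm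

lemma Uk_closure (k : ℕ) : closure (Uk k) = Metric.closedBall (((mk k : ℝ):ℂ)) (rk k) := by
  rw [Uk_eq]; exact closure_ball _ (rk_pos k).ne'

lemma Uk_closure_disj {k l : ℕ} (h : k ≠ l) : Disjoint (closure (Uk k)) (closure (Uk l)) := by
  rw [Uk_closure, Uk_closure]
  rcases h.lt_or_gt with h' | h'
  · exact Metric.closedBall_disjoint_closedBall (dist_mk h')
  · exact (Metric.closedBall_disjoint_closedBall (dist_mk h')).symm

lemma Uk_closure_subset (k : ℕ) : closure (Uk k) ⊆ Metric.ball (0:ℂ) 1 := by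
  rw [Uk_closure]
  intro z hz
  rw [Metric.mem_closedBall, Complex.dist_eq] at hz
  rw [Metric.mem_ball, Complex.dist_eq, sub_zero]
  have h1 : norm z ≤ norm (z - ((mk k : ℝ):ℂ)) + norm ((mk k : ℝ):ℂ) := by
    calc norm z = norm (z - ((mk k : ℝ):ℂ) + ((mk k : ℝ):ℂ)) := by ring_nf
      _ ≤ _ := norm_add_le _ _
  have h2 : norm ((mk k : ℝ):ℂ) = mk k := by
    rw [Complex.norm_real, Real.norm_eq_abs, _root_.abs_of_nonneg (mk_nonneg k)]
  have h3 := mk_add_rk_lt_one k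
  rw [h2] at h1
  linarith

lemma Uk_subset (k : ℕ) : Uk k ⊆ Metric.ball (0:ℂ) 1 :=
  subset_closure.trans (Uk_closure_subset k)

lemma csabs (k : ℕ) : |cs k| < 1 := by
  rw [_root_.abs_of_nonneg (cs_mem k).1]; exact (cs_mem k).2

lemma phi_inv' {c : ℝ} (hc : |c| < 1) {z : ℂ} (hz : norm z < 1) :
    φ c (φ (-c) z) = z := by
  have := phi_inv (c := -c) (by rwa [abs_neg]) hz
  rwa [neg_neg] at this

def Fk (k : ℕ) (z : ℂ) : ℂ := φ (cs (k+1)) (φ (-(cs k)) z / ((aa k : ℝ) : ℂ))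
open Classical in
def Fb (z : ℂ) : ℂ := if h : ∃ k, z ∈ Uk k then Fk (Nat.find h) z else 0

lemma Fb_eq {k : ℕ} {z : ℂ} (hz : z ∈ Uk k) : Fb z = Fk k z := by
  classical
  have h : ∃ k, z ∈ Uk k := ⟨k, hz⟩
  rw [Fb, dif_pos h]
  rcases eq_or_ne (Nat.find h) k with e | e
  · rw [e]
  · exact absurd (Set.mem_inter (Nat.find_spec h) hz) (by
      rw [(Uk_disj e).inter_eq]; exact notMem_empty z)

lemma mem_Uk {k : ℕ} {y : ℂ} (hy : norm y < aa k) : φ (cs k) y ∈ Uk k :=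
  ⟨y, by rwa [Metric.mem_ball, Complex.dist_eq, sub_zero], rfl⟩

lemma Uk_elim {k : ℕ} {z : ℂ} (hz : z ∈ Uk k) :
    ∃ y : ℂ, norm y < aa k ∧ φ (cs k) y = z := by
  obtain ⟨y, hy, rfl⟩ := hz
  exact ⟨y, by rwa [Metric.mem_ball, Complex.dist_eq, sub_zero] at hy, rfl⟩

lemma Fk_g {k : ℕ} {y : ℂ} (hy : norm y < aa k) :
    Fk k (φ (cs k) y) = φ (cs (k+1)) (y / ((aa k : ℝ):ℂ)) := by
  rw [Fk, phi_inv (csabs k) (hy.trans (aa_lt_one k))]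

lemma abs_div_lt_one {k : ℕ} {y : ℂ} (hy : norm y < aa k) :
    norm (y / ((aa k : ℝ):ℂ)) < 1 := by
  rw [norm_div, Complex.norm_real, Real.norm_eq_abs, _root_.abs_of_pos (aa_pos k), div_lt_one (aa_pos k)]
  exact hy

lemma Fk_mem {k : ℕ} {z : ℂ} (hz : z ∈ Uk k) : Fk k z ∈ Metric.ball (0:ℂ) 1 := by
  obtain ⟨y, hy, rfl⟩ := Uk_elim hz
  rw [Fk_g hy, Metric.mem_ball, Complex.dist_eq, sub_zero]
  exact phi_maps (csabs (k+1)) (abs_div_lt_one hy)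

/-! ### Inverse branches -/

def Hk (k : ℕ) (w : ℂ) : ℂ := φ (cs k) (((aa k : ℝ):ℂ) * φ (-(cs (k+1))) w)

lemma Hk_aux {k : ℕ} {w : ℂ} (hw : norm w < 1) :
    norm (((aa k : ℝ):ℂ) * φ (-(cs (k+1))) w) < aa k := by
  have h1 : norm (φ (-(cs (k+1))) w) < 1 :=
    phi_maps (by rw [abs_neg]; exact csabs (k+1)) hw
  rw [norm_mul, Complex.norm_real, Real.norm_eq_abs, _root_.abs_of_pos (aa_pos k)]
  calc aa k * norm (φ (-(cs (k+1))) w) < aa k * 1 :=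
        (mul_lt_mul_iff_right₀ (aa_pos k)).2 h1
    _ = aa k := mul_one _

lemma Hk_mem {k : ℕ} {w : ℂ} (hw : norm w < 1) : Hk k w ∈ Uk k :=
  mem_Uk (Hk_aux hw)

lemma FHk {k : ℕ} {w : ℂ} (hw : norm w < 1) : Fk k (Hk k w) = w := by
  have ha : ((aa k : ℝ):ℂ) ≠ 0 := Complex.ofReal_ne_zero.mpr (aa_pos k).ne'
  rw [Hk, Fk_g (Hk_aux hw), mul_div_cancel_left₀ _ ha, phi_inv' (csabs (k+1)) hw]

lemma HFk {k : ℕ} {z : ℂ} (hz : z ∈ Uk k) : Hk k (Fk k z) = z := by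
  obtain ⟨y, hy, rfl⟩ := Uk_elim hz
  have ha : ((aa k : ℝ):ℂ) ≠ 0 := Complex.ofReal_ne_zero.mpr (aa_pos k).ne'
  rw [Fk_g hy, Hk, phi_inv (csabs (k+1)) (abs_div_lt_one hy), mul_div_cancel₀ _ ha]

lemma contAt_phi (c : ℝ) {z : ℂ} (h : (1:ℂ) + c*z ≠ 0) : ContinuousAt (φ c) z := by
  apply ContinuousAt.div
  · fun_prop
  · fun_prop
  · exact h

lemma Hk_contOn (k : ℕ) : ContinuousOn (Hk k) (Metric.ball (0:ℂ) 1) := by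
  intro w hw
  rw [Metric.mem_ball, Complex.dist_eq, sub_zero] at hw
  apply ContinuousAt.continuousWithinAt
  have h1 : (1:ℂ) + ((-(cs (k+1)) : ℝ):ℂ)*w ≠ 0 :=
    den_ne (by rw [abs_neg]; exact (csabs (k+1)).le) hw
  have h2 : (1:ℂ) + ((cs k : ℝ):ℂ)*(((aa k : ℝ):ℂ) * φ (-(cs (k+1))) w) ≠ 0 :=
    den_ne (csabs k).le ((Hk_aux hw).trans (aa_lt_one k))
  have h3 : ContinuousAt (fun w : ℂ => ((aa k : ℝ):ℂ) * φ (-(cs (k+1))) w) w :=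
    continuousAt_const.mul (contAt_phi _ h1)
  have h4 : ContinuousAt (φ (cs k) ∘ fun w : ℂ => ((aa k : ℝ):ℂ) * φ (-(cs (k+1))) w) w :=
    ContinuousAt.comp (contAt_phi _ h2) h3
  exact h4

/-! ### Derivatives -/

lemma hasDerivAt_phi (c : ℝ) {z : ℂ} (h : (1:ℂ) + c*z ≠ 0) :
    HasDerivAt (φ c) (((1:ℂ) - (c:ℂ)^2)/(1 + c*z)^2) z := by
  have h1 : HasDerivAt (fun w : ℂ => w + (c:ℂ)) 1 z := (hasDerivAt_id z).add_const _
  have h2 : HasDerivAt (fun w : ℂ => (1:ℂ) + (c:ℂ)*w) ((c:ℂ)) z := by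
    simpa using ((hasDerivAt_id z).const_mul ((c:ℂ))).const_add (1:ℂ)
  have h3 := h1.div h2 h
  refine HasDerivAt.congr_deriv h3 ?_
  ring

lemma one_sub_sq_ne (k : ℕ) : (1:ℂ) - ((cs k : ℝ):ℂ)^2 ≠ 0 := by
  have h : (0:ℝ) < 1 - (cs k)^2 := by nlinarith [(cs_mem k).1, (cs_mem k).2]
  intro hh
  apply h.ne'
  exact_mod_cast hh

lemma Uk_data {k : ℕ} {z : ℂ} (hz : z ∈ Uk k) :
    norm z < 1 ∧ (1:ℂ) + ((-(cs k) : ℝ):ℂ)*z ≠ 0 ∧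
      norm (φ (-(cs k)) z / ((aa k : ℝ):ℂ)) < 1 := by
  have hz1 : norm z < 1 := by
    have := Uk_subset k hz
    rwa [Metric.mem_ball, Complex.dist_eq, sub_zero] at this
  refine ⟨hz1, den_ne (by rw [abs_neg]; exact (csabs k).le) hz1, ?_⟩
  obtain ⟨y, hy, rfl⟩ := Uk_elim hz
  rw [phi_inv (csabs k) (hy.trans (aa_lt_one k))]
  exact abs_div_lt_one hy

lemma hasDerivAt_Fk {k : ℕ} {z : ℂ} (hz : z ∈ Uk k) :
    HasDerivAt (Fk k)
      ((((1:ℂ) - ((cs (k+1) : ℝ):ℂ)^2)/(1 + (cs (k+1) : ℝ) * (φ (-(cs k)) z / ((aa k : ℝ):ℂ)))^2) *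
        ((((1:ℂ) - ((-(cs k) : ℝ):ℂ)^2)/(1 + ((-(cs k)) : ℝ) * z)^2) / ((aa k : ℝ):ℂ))) z := by
  obtain ⟨hz1, hden1, hw⟩ := Uk_data hz
  have hinner : HasDerivAt (fun z => φ (-(cs k)) z / ((aa k : ℝ):ℂ))
      ((((1:ℂ) - ((-(cs k) : ℝ):ℂ)^2)/(1 + ((-(cs k)) : ℝ) * z)^2) / ((aa k : ℝ):ℂ)) z :=
    (hasDerivAt_phi _ hden1).div_const _
  have houter := hasDerivAt_phi (cs (k+1)) (den_ne (csabs (k+1)).le hw)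
  exact houter.comp z hinner

lemma deriv_Fk_ne {k : ℕ} {z : ℂ} (hz : z ∈ Uk k) : deriv (Fk k) z ≠ 0 := by
  obtain ⟨hz1, hden1, hw⟩ := Uk_data hz
  rw [(hasDerivAt_Fk hz).deriv]
  have hden2 : (1:ℂ) + (cs (k+1) : ℝ) * (φ (-(cs k)) z / ((aa k : ℝ):ℂ)) ≠ 0 :=
    den_ne (csabs (k+1)).le hw
  have hnegsq : (1:ℂ) - ((-(cs k) : ℝ):ℂ)^2 ≠ 0 := by
    push_cast
    have := one_sub_sq_ne k
    push_cast at this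
    intro hh; apply this; linear_combination hh
  have ha : ((aa k : ℝ):ℂ) ≠ 0 := Complex.ofReal_ne_zero.mpr (aa_pos k).ne'
  exact mul_ne_zero
    (div_ne_zero (one_sub_sq_ne (k+1)) (pow_ne_zero _ hden2))
    (div_ne_zero (div_ne_zero hnegsq (pow_ne_zero _ hden1)) ha)

/-! ### The union and components -/

def UU : Set ℂ := ⋃ k, Uk k

lemma UU_open : IsOpen UU := isOpen_iUnion Uk_open

lemma UU_subset : UU ⊆ Metric.ball (0:ℂ) 1 := iUnion_subset Uk_subset

lemma compV {x : ℂ} (hx : x ∈ Metric.ball (0:ℂ) 1) :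
    connectedComponentIn (Metric.ball (0:ℂ) 1) x = Metric.ball (0:ℂ) 1 :=
  IsPreconnected.connectedComponentIn (convex_ball _ _).isPreconnected hx

lemma compU {k : ℕ} {z : ℂ} (hz : z ∈ Uk k) : connectedComponentIn UU z = Uk k := by
  have hUk : z ∈ UU := mem_iUnion.2 ⟨k, hz⟩
  apply Subset.antisymm
  · by_contra hsub
    rw [not_subset] at hsub
    obtain ⟨w, hwS, hwk⟩ := hsub
    have hS := isPreconnected_connectedComponentIn (x := z) (F := UU)
    have hv : IsOpen (⋃ (l : ℕ) (_ : l ≠ k), Uk l) :=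
      isOpen_iUnion fun l => isOpen_iUnion fun _ => Uk_open l
    have hcover : connectedComponentIn UU z ⊆ Uk k ∪ ⋃ (l : ℕ) (_ : l ≠ k), Uk l := by
      refine (connectedComponentIn_subset _ _).trans ?_
      intro x hx
      obtain ⟨l, hl⟩ := mem_iUnion.1 hx
      rcases eq_or_ne l k with e | e
      · exact Or.inl (e ▸ hl)
      · exact Or.inr (mem_iUnion.2 ⟨l, mem_iUnion.2 ⟨e, hl⟩⟩)
    have hne1 : (connectedComponentIn UU z ∩ Uk k).Nonempty :=
      ⟨z, mem_connectedComponentIn hUk, hz⟩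
    have hne2 : (connectedComponentIn UU z ∩ ⋃ (l : ℕ) (_ : l ≠ k), Uk l).Nonempty := by
      refine ⟨w, hwS, ?_⟩
      obtain ⟨l, hl⟩ := mem_iUnion.1 ((connectedComponentIn_subset _ _) hwS)
      have : l ≠ k := fun e => hwk (e ▸ hl)
      exact mem_iUnion.2 ⟨l, mem_iUnion.2 ⟨this, hl⟩⟩
    obtain ⟨x, _, hx1, hx2⟩ := hS _ _ (Uk_open k) hv hcover hne1 hne2
    obtain ⟨l, hl⟩ := mem_iUnion.1 hx2
    obtain ⟨hlk, hxl⟩ := mem_iUnion.1 hl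
    exact (Uk_disj (Ne.symm hlk)).ne_of_mem hx1 hxl rfl
  · apply IsPreconnected.subset_connectedComponentIn _ hz (subset_iUnion Uk _)
    rw [Uk_eq]
    exact (convex_ball _ _).isPreconnected

lemma sc_ball (x : ℂ) (r : ℝ) (h : 0 < r) : SimplyConnectedSpace ↥(Metric.ball x r) := by
  haveI := Convex.contractibleSpace (convex_ball x r) (Metric.nonempty_ball.2 h)
  infer_instance

lemma Fb_image (k : ℕ) : Fb '' Uk k = Metric.ball (0:ℂ) 1 := by
  apply Subset.antisymm
  · rintro _ ⟨z, hz, rfl⟩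
    rw [Fb_eq hz]
    exact Fk_mem hz
  · intro w hw
    rw [Metric.mem_ball, Complex.dist_eq, sub_zero] at hw
    exact ⟨Hk k w, Hk_mem hw, by rw [Fb_eq (Hk_mem hw)]; exact FHk hw⟩

/-! ### Remaining auxiliary lemmas -/

lemma g_zero : g 0 = id := by
  funext z
  have h : cs 0 = 0 := rfl
  simp [g, φ, h]

lemma g_real (k : ℕ) : ∀ y ∈ Metric.ball (0:ℂ) 1, y.im = 0 → (g k y).im = 0 := by
  intro y _ him
  have hyr : y = ((y.re : ℝ):ℂ) := Complex.ext rfl (by simp [him])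
  rw [g, φ, hyr]
  have h2 : ((y.re:ℂ) + ((cs k : ℝ):ℂ))/(1 + ((cs k : ℝ):ℂ)*(y.re:ℂ))
      = (((y.re + cs k)/(1 + cs k*y.re) : ℝ):ℂ) := by push_cast; ring
  rw [h2, Complex.ofReal_im]

lemma g_inj (k : ℕ) : Set.InjOn (g k) (Metric.ball 0 1) := by
  intro x hx y hy hxy
  rw [Metric.mem_ball, Complex.dist_eq, sub_zero] at hx hy
  simp only [g] at hxy
  have h1 := phi_inv (csabs k) hx
  have h2 := phi_inv (csabs k) hy
  have := congrArg (φ (-(cs k))) hxy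
  rwa [h1, h2] at this

lemma g_diffOn (k : ℕ) : DifferentiableOn ℂ (g k) (Metric.ball 0 1) := by
  intro z hz
  rw [Metric.mem_ball, Complex.dist_eq, sub_zero] at hz
  exact (hasDerivAt_phi (cs k) (den_ne (csabs k).le hz)).differentiableAt.differentiableWithinAt

lemma g_image (k : ℕ) : g k '' Metric.ball (0:ℂ) 1 = Metric.ball (0:ℂ) 1 :=
  phi_image_one (cs_mem k).2 (cs_mem k).1

lemma F_step {k : ℕ} {y : ℂ} (hy : y ∈ Metric.ball (0:ℂ) (aa k)) :
    Fb (g k y) = g (k+1) (y / ((aa k : ℝ):ℂ)) := by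
  rw [Metric.mem_ball, Complex.dist_eq, sub_zero] at hy
  rw [show g k y = φ (cs k) y from rfl, Fb_eq (mem_Uk hy), Fk_g hy]
  rfl

lemma prodC (n : ℕ) : (∏ i ∈ Finset.range n, ((aa i : ℝ):ℂ)) = ((PP n : ℝ):ℂ) := by
  rw [PP]; push_cast; rfl

lemma abs_div_PP {n : ℕ} {x : ℂ} (hx : norm x < 1/2) :
    norm (x / ((PP n : ℝ):ℂ)) < aa n := by
  have hP := PP_gt_half n
  have hP0 : (0:ℝ) < PP n := by linarith
  rw [norm_div, Complex.norm_real, Real.norm_eq_abs, _root_.abs_of_pos hP0, div_lt_iff₀ hP0]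
  have h2 : 1/2 < PP (n+1) := PP_gt_half (n+1)
  have h3 : PP (n+1) = PP n * aa n := by rw [PP, Finset.prod_range_succ]; rfl
  calc norm x < 1/2 := hx
    _ < PP n * aa n := by rw [← h3]; exact h2
    _ = aa n * PP n := mul_comm _ _

lemma iterate_formula (n : ℕ) : ∀ x ∈ Metric.ball (0:ℂ) (1/2),
    Fb^[n] x = g n (x / (∏ i ∈ Finset.range n, ((aa i : ℝ):ℂ))) := by
  induction n with
  | zero =>
    intro x _
    simp only [Function.iterate_zero, id_eq, Finset.range_zero, Finset.prod_empty, div_one]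
    rw [g_zero]; rfl
  | succ n ih =>
    intro x hx
    have hx' : norm x < 1/2 := by
      rwa [Metric.mem_ball, Complex.dist_eq, sub_zero] at hx
    rw [Function.iterate_succ_apply', ih x hx, prodC n]
    have habs : x / ((PP n : ℝ):ℂ) ∈ Metric.ball (0:ℂ) (aa n) := by
      rw [Metric.mem_ball, Complex.dist_eq, sub_zero]
      exact abs_div_PP hx'
    rw [F_step habs, prodC (n+1)]
    congr 1
    have h3 : PP (n+1) = PP n * aa n := by rw [PP, Finset.prod_range_succ]; rfl
    rw [div_div, h3]
    push_cast
    ring_nf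

lemma iterate_image (n : ℕ) :
    Fb^[n] '' Metric.ball (0:ℂ) (1/2) ⊆ g n '' Metric.ball (0:ℂ) (aa n) := by
  rintro _ ⟨x, hx, rfl⟩
  rw [iterate_formula n x hx, prodC n]
  have hx' : norm x < 1/2 := by
    rwa [Metric.mem_ball, Complex.dist_eq, sub_zero] at hx
  exact mem_Uk (abs_div_PP hx')

/-! ### The box mapping -/

lemma mapsToF : Set.MapsTo Fb UU (Metric.ball (0:ℂ) 1) := by
  intro z hz
  obtain ⟨k, hk⟩ := mem_iUnion.1 hz
  rw [Fb_eq hk]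
  exact Fk_mem hk

lemma holoF : DifferentiableOn ℂ Fb UU := by
  intro z hz
  obtain ⟨k, hk⟩ := mem_iUnion.1 hz
  have hev : Fb =ᶠ[nhds z] Fk k :=
    Filter.eventuallyEq_of_mem ((Uk_open k).mem_nhds hk) (fun w hw => Fb_eq hw)
  exact (hev.differentiableAt_iff.mpr (hasDerivAt_Fk hk).differentiableAt).differentiableWithinAt

lemma critF : {z | z ∈ UU ∧ deriv Fb z = 0}.Finite := by
  have h : {z | z ∈ UU ∧ deriv Fb z = 0} = ∅ := by
    ext z
    simp only [mem_setOf_eq, mem_empty_iff_false, iff_false, not_and]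
    intro hz hd
    obtain ⟨k, hk⟩ := mem_iUnion.1 hz
    have hev : Fb =ᶠ[nhds z] Fk k :=
      Filter.eventuallyEq_of_mem ((Uk_open k).mem_nhds hk) (fun w hw => Fb_eq hw)
    exact deriv_Fk_ne hk (hev.symm.deriv_eq.trans hd)
  rw [h]
  exact finite_empty

def BB : ComplexBoxMapping where
  U := UU
  V := Metric.ball (0:ℂ) 1
  F := Fb
  isOpen_U := UU_open
  isOpen_V := Metric.isOpen_ball
  subset_UV := UU_subset
  mapsTo := mapsToF
  holo := holoF
  crit_finite := critF
  components_V_finite := by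
    apply Set.Finite.subset (finite_singleton (Metric.ball (0:ℂ) 1))
    rintro C ⟨x, hx, rfl⟩
    simp [compV hx]
  components_V_simplyConnected := by
    intro x hx
    rw [compV hx]
    exact sc_ball 0 1 one_pos
  components_V_disjoint_closures := by
    intro x hx y hy hne
    exact absurd (by rw [compV hx, compV hy]) hne
  components_U_simplyConnected := by
    intro x hx
    obtain ⟨k, hk⟩ := mem_iUnion.1 hx
    rw [compU hk, Uk_eq]
    exact sc_ball _ _ (rk_pos k)
  components_U := by
    intro x hx
    obtain ⟨k, hk⟩ := mem_iUnion.1 hx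
    refine Or.inr ⟨?_, ?_⟩
    · rw [compU hk, Uk_closure]
      exact isCompact_closedBall _ _
    · rw [compU hk, compV (UU_subset hx)]
      exact Uk_closure_subset k
  components_U_disjoint_closures := by
    intro x hx y hy hne
    obtain ⟨k, hk⟩ := mem_iUnion.1 hx
    obtain ⟨l, hl⟩ := mem_iUnion.1 hy
    rw [compU hk, compU hl] at hne ⊢
    have hkl : k ≠ l := fun e => hne (by rw [e])
    exact (Uk_closure_disj hkl).inter_eq
  maps_components := by
    intro x hx
    obtain ⟨k, hk⟩ := mem_iUnion.1 hx
    have h1 : Fb x ∈ Metric.ball (0:ℂ) 1 := mapsToF hx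
    rw [compU hk, compV h1]
    exact Fb_image k
  proper_components := by
    intro x hx K hKV hK
    obtain ⟨k, hk⟩ := mem_iUnion.1 hx
    have h1 : Fb x ∈ Metric.ball (0:ℂ) 1 := mapsToF hx
    rw [compV h1] at hKV
    rw [compU hk]
    have hset : Uk k ∩ Fb ⁻¹' K = Hk k '' K := by
      ext z
      constructor
      · rintro ⟨hz1, hz2⟩
        exact ⟨Fb z, hz2, by rw [Fb_eq hz1]; exact HFk hz1⟩
      · rintro ⟨w, hw, rfl⟩
        have hw1 : norm w < 1 := by
          have := hKV hw
          rwa [Metric.mem_ball, Complex.dist_eq, sub_zero] at this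
        refine ⟨Hk_mem hw1, ?_⟩
        rw [mem_preimage, Fb_eq (Hk_mem hw1), FHk hw1]
        exact hw
    rw [hset]
    exact hK.image_of_continuousOn ((Hk_contOn k).mono hKV)

end S15


/-- A complex box mapping with a wandering disk: `𝒱 = 𝔻`, every component of `𝒰` is
compactly contained in `𝔻`, and the disk `W = 𝔻_{1/2}` has pairwise disjoint forward
images. Concretely, `𝒰 = ⋃ₖ gₖ(𝔻_{aₖ})` for real Möbius automorphisms `gₖ` of `𝔻` with
pairwise disjoint images `gₖ(𝔻_{aₖ})`, `F(gₖ(y)) = g_{k+1}(y/aₖ)`, `∏ aᵢ = 1/2`, and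
`F^n(x) = gₙ(x/(a₀⋯a_{n-1}))` on `W`, so `F^n(W) ⊆ gₙ(𝔻_{aₙ})`. (Indexing from `0`,
with `g 0 = id`.) -/
theorem stmt_15 :
    ∃ (B : ComplexBoxMapping) (a : ℕ → ℝ) (g : ℕ → ℂ → ℂ),
      B.V = Metric.ball (0 : ℂ) 1 ∧
      (∀ x ∈ B.U, IsCompact (closure (connectedComponentIn B.U x)) ∧
        closure (connectedComponentIn B.U x) ⊆ Metric.ball (0 : ℂ) 1) ∧
      (∀ i, a i ∈ Set.Ioo (0 : ℝ) 1) ∧ Monotone a ∧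
      Tendsto a atTop (nhds 1) ∧
      Tendsto (fun n => ∏ i ∈ Finset.range n, a i) atTop (nhds (1 / 2)) ∧
      g 0 = id ∧
      (∀ k, DifferentiableOn ℂ (g k) (Metric.ball 0 1) ∧
        Set.InjOn (g k) (Metric.ball 0 1) ∧
        g k '' Metric.ball (0 : ℂ) 1 = Metric.ball (0 : ℂ) 1 ∧
        ∀ y ∈ Metric.ball (0 : ℂ) 1, y.im = 0 → (g k y).im = 0) ∧
      (∀ k l, k ≠ l →
        Disjoint (g k '' Metric.ball (0 : ℂ) (a k)) (g l '' Metric.ball (0 : ℂ) (a l))) ∧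
      B.U = ⋃ k : ℕ, g k '' Metric.ball (0 : ℂ) (a k) ∧
      (∀ k, ∀ y ∈ Metric.ball (0 : ℂ) (a k),
        B.F (g k y) = g (k + 1) (y / ((a k : ℝ) : ℂ))) ∧
      (∀ n : ℕ, ∀ x ∈ Metric.ball (0 : ℂ) (1 / 2),
        B.F^[n] x = g n (x / (∏ i ∈ Finset.range n, ((a i : ℝ) : ℂ)))) ∧
      (∀ n : ℕ, B.F^[n] '' Metric.ball (0 : ℂ) (1 / 2) ⊆
        g n '' Metric.ball (0 : ℂ) (a n)) ∧
      (∀ n m : ℕ, n ≠ m →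
        Disjoint (B.F^[n] '' Metric.ball (0 : ℂ) (1 / 2))
          (B.F^[m] '' Metric.ball (0 : ℂ) (1 / 2))) := by
  
  classical
  refine ⟨S15.BB, S15.aa, S15.g, rfl, ?_, ?_, S15.aa_mono, S15.aa_tendsto, S15.PP_tendsto,
    S15.g_zero, ?_, ?_, rfl, ?_, ?_, ?_, ?_⟩
  · intro x hx
    have hB : S15.BB.U = S15.UU := rfl
    rw [hB] at hx ⊢
    obtain ⟨k, hk⟩ := Set.mem_iUnion.1 hx
    refine ⟨?_, ?_⟩
    · rw [S15.compU hk, S15.Uk_closure]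
      exact isCompact_closedBall _ _
    · rw [S15.compU hk]
      exact S15.Uk_closure_subset k
  · exact fun i => ⟨S15.aa_pos i, S15.aa_lt_one i⟩
  · exact fun k => ⟨S15.g_diffOn k, S15.g_inj k, S15.g_image k, S15.g_real k⟩
  · exact fun k l h => S15.Uk_disj h
  · exact fun k y hy => S15.F_step hy
  · exact fun n x hx => S15.iterate_formula n x hx
  · exact fun n => S15.iterate_image n
  · intro n m hnm
    exact Set.disjoint_of_subset (S15.iterate_image n) (S15.iterate_image m) (S15.Uk_disj hnm)
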